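/- Under the Mallows model, for any pair i < i', the probability that σ ranks σ₀⁻¹(i') before σ₀⁻¹(i) (i.e., σ(σ₀⁻¹(i')) < σ(σ₀⁻¹(i))) is at most φ/(1+φ). -/

import Mathlib

def kendallTau {N : ℕ} (σ₁ σ₂ : Equiv.Perm (Fin N)) : ℕ :=
  (Finset.univ.filter fun p : Fin N × Fin N =>
    p.1 < p.2 ∧ ((σ₁ p.1 < σ₁ p.2 ∧ σ₂ p.2 < σ₂ p.1) ∨
                 (σ₁ p.2 < σ₁ p.1 ∧ σ₂ p.1 < σ₂ p.2))).card

/-- The Mallows normalization constant. -/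
noncomputable def mallowsZ (N : ℕ) (φ : ℝ) (σ₀ : Equiv.Perm (Fin N)) : ℝ :=
  ∑ σ : Equiv.Perm (Fin N), φ ^ kendallTau σ₀ σ

/-- Probability of an event under the Mallows distribution with center `σ₀`. -/
noncomputable def mallowsProb (N : ℕ) (φ : ℝ) (σ₀ : Equiv.Perm (Fin N))
    (E : Equiv.Perm (Fin N) → Prop) [DecidablePred E] : ℝ :=
  (∑ σ ∈ Finset.univ.filter E, φ ^ kendallTau σ₀ σ) / mallowsZ N φ σ₀

namespace MallowsAux

variable {N : ℕ}

def Dp (τ σ : Equiv.Perm (Fin N)) (p q : Fin N) : Prop :=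
  (τ p < τ q ∧ σ q < σ p) ∨ (τ q < τ p ∧ σ p < σ q)

instance (τ σ : Equiv.Perm (Fin N)) (p q : Fin N) : Decidable (Dp τ σ p q) := by
  unfold Dp; infer_instance

def disc (τ σ : Equiv.Perm (Fin N)) (p q : Fin N) : ℕ :=
  if Dp τ σ p q then 1 else 0

lemma Dp_symm (τ σ : Equiv.Perm (Fin N)) (p q : Fin N) : Dp τ σ p q ↔ Dp τ σ q p := by
  unfold Dp; exact or_comm

lemma disc_symm (τ σ : Equiv.Perm (Fin N)) (p q : Fin N) : disc τ σ p q = disc τ σ q p := by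
  unfold disc; rw [if_congr (Dp_symm τ σ p q) rfl rfl]

def dsum (τ σ : Equiv.Perm (Fin N)) : ℕ := ∑ p : Fin N, ∑ q : Fin N, disc τ σ p q

lemma disc_split (τ σ : Equiv.Perm (Fin N)) (p q : Fin N) :
    disc τ σ p q = (if p < q ∧ Dp τ σ p q then 1 else 0)
      + (if q < p ∧ Dp τ σ p q then 1 else 0) := by
  unfold disc
  by_cases hD : Dp τ σ p q
  · have hpq : p ≠ q := by
      rintro rfl
      rcases hD with ⟨h, _⟩ | ⟨h, _⟩ <;> exact lt_irrefl _ h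
    rcases hpq.lt_or_gt with h | h
    · simp [hD, h, asymm h]
    · simp [hD, h, asymm h]
  · simp [hD]

lemma kendallTau_eq (τ σ : Equiv.Perm (Fin N)) :
    kendallTau τ σ = ∑ p : Fin N, ∑ q : Fin N, (if p < q ∧ Dp τ σ p q then 1 else 0) := by
  unfold kendallTau
  rw [Finset.card_filter, Fintype.sum_prod_type]
  rfl

lemma dsum_eq (τ σ : Equiv.Perm (Fin N)) : dsum τ σ = 2 * kendallTau τ σ := by
  have hK2 : (∑ p : Fin N, ∑ q : Fin N, (if q < p ∧ Dp τ σ p q then 1 else 0))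
      = kendallTau τ σ := by
    rw [kendallTau_eq, Finset.sum_comm]
    refine Finset.sum_congr rfl fun p _ => Finset.sum_congr rfl fun q _ => ?_
    exact if_congr (and_congr_right' (Dp_symm τ σ q p)) rfl rfl
  unfold dsum
  simp only [disc_split, Finset.sum_add_distrib]
  rw [hK2, ← kendallTau_eq]
  ring

lemma dsum_swap (τ σ : Equiv.Perm (Fin N)) (a b : Fin N) :
    dsum τ (σ * Equiv.swap a b) = dsum (τ * Equiv.swap a b) σ := by
  unfold dsum
  refine Fintype.sum_equiv (Equiv.swap a b) _ _ fun p => ?_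
  refine Fintype.sum_equiv (Equiv.swap a b) _ _ fun q => ?_
  unfold disc Dp
  simp [Equiv.Perm.mul_apply, Equiv.swap_apply_self]
  exact if_congr Iff.rfl rfl rfl

lemma dsum_core (τ σ : Equiv.Perm (Fin N)) (a b : Fin N) (hab : a ≠ b)
    (hτ : τ a < τ b) (hσ : σ b < σ a) :
    dsum (τ * Equiv.swap a b) σ + 2 ≤ dsum τ σ := by
  set t := Equiv.swap a b with ht
  set τ' := τ * t with hτ'def
  have hta : τ' a = τ b := by simp [hτ'def, ht, Equiv.Perm.mul_apply]
  have htb : τ' b = τ a := by simp [hτ'def, ht, Equiv.Perm.mul_apply]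
  have htc : ∀ c, c ≠ a → c ≠ b → τ' c = τ c := fun c h1 h2 => by
    simp [hτ'def, ht, Equiv.Perm.mul_apply, Equiv.swap_apply_of_ne_of_ne h1 h2]
  have hsplit : ∀ f : Fin N → ℕ, ∑ q : Fin N, f q
      = (f a + f b) + ∑ q ∈ Finset.univ \ {a, b}, f q := by
    intro f
    rw [← Finset.sum_sdiff (Finset.subset_univ ({a, b} : Finset (Fin N))),
      Finset.sum_pair hab]
    ring
  have hds : ∀ ρ : Equiv.Perm (Fin N), dsum ρ σ
      = ((∑ p : Fin N, disc ρ σ p a) + (∑ p : Fin N, disc ρ σ p b))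
        + ∑ q ∈ Finset.univ \ {a, b}, ∑ p : Fin N, disc ρ σ p q := by
    intro ρ
    unfold dsum
    rw [Finset.sum_comm]
    exact hsplit _
  have key : ∀ c, c ≠ a → c ≠ b →
      disc τ' σ a c + disc τ' σ b c ≤ disc τ σ a c + disc τ σ b c := by
    intro c hca hcb
    unfold disc Dp
    simp only [hta, htb, htc c hca hcb, Fin.lt_def]
    simp only [Fin.lt_def] at hτ hσ
    split_ifs <;> omega
  have hcol : ∀ q ∈ Finset.univ \ ({a, b} : Finset (Fin N)),
      (∑ p : Fin N, disc τ' σ p q) ≤ (∑ p : Fin N, disc τ σ p q) := by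
    intro q hq
    simp only [Finset.mem_sdiff, Finset.mem_insert, Finset.mem_singleton] at hq
    obtain ⟨-, hq⟩ := hq
    push_neg at hq
    obtain ⟨hqa, hqb⟩ := hq
    rw [hsplit (fun p => disc τ' σ p q), hsplit (fun p => disc τ σ p q)]
    have hrest : ∑ p ∈ Finset.univ \ ({a, b} : Finset (Fin N)), disc τ' σ p q
        = ∑ p ∈ Finset.univ \ ({a, b} : Finset (Fin N)), disc τ σ p q := by
      refine Finset.sum_congr rfl fun p hp => ?_
      simp only [Finset.mem_sdiff, Finset.mem_insert, Finset.mem_singleton] at hp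
      obtain ⟨-, hp⟩ := hp
      push_neg at hp
      unfold disc Dp
      simp only [htc p hp.1 hp.2, htc q hqa hqb]
    have := key q hqa hqb
    omega
  have hcolsum := Finset.sum_le_sum hcol
  have hpair : (∑ p : Fin N, disc τ' σ p a) + (∑ p : Fin N, disc τ' σ p b) + 2
      ≤ (∑ p : Fin N, disc τ σ p a) + (∑ p : Fin N, disc τ σ p b) := by
    rw [← Finset.sum_add_distrib, ← Finset.sum_add_distrib,
      hsplit (fun p => disc τ' σ p a + disc τ' σ p b),
      hsplit (fun p => disc τ σ p a + disc τ σ p b)]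
    have hrest : ∑ p ∈ Finset.univ \ ({a, b} : Finset (Fin N)),
        (disc τ' σ p a + disc τ' σ p b)
        ≤ ∑ p ∈ Finset.univ \ ({a, b} : Finset (Fin N)),
        (disc τ σ p a + disc τ σ p b) := by
      refine Finset.sum_le_sum fun p hp => ?_
      simp only [Finset.mem_sdiff, Finset.mem_insert, Finset.mem_singleton] at hp
      obtain ⟨-, hp⟩ := hp
      push_neg at hp
      rw [disc_symm τ' σ p a, disc_symm τ' σ p b, disc_symm τ σ p a, disc_symm τ σ p b]
      exact key p hp.1 hp.2
    have h1 : disc τ' σ a a = 0 := by unfold disc Dp; simp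
    have h2 : disc τ σ a a = 0 := by unfold disc Dp; simp
    have h3 : disc τ' σ b b = 0 := by unfold disc Dp; simp
    have h4 : disc τ σ b b = 0 := by unfold disc Dp; simp
    have h5 : disc τ' σ a b = 0 := by
      unfold disc Dp
      simp only [hta, htb, Fin.lt_def]
      simp only [Fin.lt_def] at hτ hσ
      split_ifs <;> omega
    have h6 : disc τ' σ b a = 0 := by
      rw [disc_symm]; exact h5
    have h7 : disc τ σ a b = 1 := by
      unfold disc Dp
      exact if_pos (show Dp τ σ a b from Or.inl ⟨hτ, hσ⟩)
    have h8 : disc τ σ b a = 1 := by rw [disc_symm]; exact h7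
    omega
  rw [hds τ', hds τ]
  omega

lemma kendall_decrease (σ₀ σ : Equiv.Perm (Fin N)) (a b : Fin N) (hab : a ≠ b)
    (hτ : σ₀ a < σ₀ b) (hσ : σ b < σ a) :
    kendallTau σ₀ (σ * Equiv.swap a b) + 1 ≤ kendallTau σ₀ σ := by
  have h1 := dsum_core σ₀ σ a b hab hτ hσ
  have h2 := dsum_swap σ₀ σ a b
  rw [dsum_eq] at h1
  rw [dsum_eq σ₀ σ] at h1
  rw [dsum_eq σ₀ (σ * Equiv.swap a b), dsum_eq (σ₀ * Equiv.swap a b) σ] at h2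
  omega

end MallowsAux

theorem mallows_inversion_prob_le (N : ℕ) (φ : ℝ)
    (hφ0 : 0 < φ) (hφ1 : φ < 1) (σ₀ : Equiv.Perm (Fin N)) (i i' : Fin N)
    (hii' : i < i') :
    mallowsProb N φ σ₀ (fun σ => σ (σ₀⁻¹ i') < σ (σ₀⁻¹ i)) ≤ φ / (1 + φ) := by
  classical
  set a : Fin N := σ₀⁻¹ i with ha
  set b : Fin N := σ₀⁻¹ i' with hb
  have hσ₀a : σ₀ a = i := by simp [ha]
  have hσ₀b : σ₀ b = i' := by simp [hb]
  have hτab : σ₀ a < σ₀ b := by rw [hσ₀a, hσ₀b]; exact hii'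
  have hab : a ≠ b := by
    intro h
    rw [h] at hσ₀a
    rw [hσ₀a] at hσ₀b
    exact hii'.ne hσ₀b
  set t : Equiv.Perm (Fin N) := Equiv.swap a b with htdef
  set K : Equiv.Perm (Fin N) → ℝ := fun σ => φ ^ kendallTau σ₀ σ with hK
  set B : Finset (Equiv.Perm (Fin N)) :=
    Finset.univ.filter (fun σ : Equiv.Perm (Fin N) => σ b < σ a) with hB
  set C : Finset (Equiv.Perm (Fin N)) :=
    Finset.univ.filter (fun σ : Equiv.Perm (Fin N) => ¬ (σ b < σ a)) with hC
  have hKnonneg : ∀ σ, 0 ≤ K σ := fun σ => pow_nonneg hφ0.le _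
  have hKpos : ∀ σ, 0 < K σ := fun σ => pow_pos hφ0 _
  -- the image of B under right multiplication by the swap lands in C
  have himg : B.image (· * t) ⊆ C := by
    intro τ hτm
    simp only [hB, Finset.mem_image, Finset.mem_filter, Finset.mem_univ, true_and] at hτm
    obtain ⟨σ, hE, rfl⟩ := hτm
    simp only [hC, Finset.mem_filter, Finset.mem_univ, true_and]
    have h1 : (σ * t) b = σ a := by
      simp [htdef, Equiv.Perm.mul_apply, Equiv.swap_apply_right]
    have h2 : (σ * t) a = σ b := by
      simp [htdef, Equiv.Perm.mul_apply, Equiv.swap_apply_left]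
    rw [h1, h2]
    exact not_lt.2 hE.le
  have hSB_le : ∑ σ ∈ B, K σ ≤ φ * ∑ τ ∈ C, K τ := by
    have step1 : ∑ σ ∈ B, K σ ≤ ∑ σ ∈ B, φ ^ (kendallTau σ₀ (σ * t) + 1) := by
      refine Finset.sum_le_sum fun σ hσm => ?_
      simp only [hB, Finset.mem_filter, Finset.mem_univ, true_and] at hσm
      exact pow_le_pow_of_le_one hφ0.le hφ1.le
        (MallowsAux.kendall_decrease σ₀ σ a b hab hτab hσm)
    have step2 : ∑ σ ∈ B, φ ^ (kendallTau σ₀ (σ * t) + 1)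
        = φ * ∑ σ ∈ B, K (σ * t) := by
      rw [Finset.mul_sum]
      refine Finset.sum_congr rfl fun σ _ => ?_
      rw [pow_succ]
      ring
    have step3 : ∑ σ ∈ B, K (σ * t) = ∑ τ ∈ B.image (· * t), K τ := by
      rw [Finset.sum_image]
      intro x _ y _ hxy
      exact mul_right_cancel hxy
    have step4 : ∑ τ ∈ B.image (· * t), K τ ≤ ∑ τ ∈ C, K τ :=
      Finset.sum_le_sum_of_subset_of_nonneg himg fun τ _ _ => hKnonneg τ
    calc ∑ σ ∈ B, K σ ≤ ∑ σ ∈ B, φ ^ (kendallTau σ₀ (σ * t) + 1) := step1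
      _ = φ * ∑ σ ∈ B, K (σ * t) := step2
      _ = φ * ∑ τ ∈ B.image (· * t), K τ := by rw [step3]
      _ ≤ φ * ∑ τ ∈ C, K τ := by
          exact mul_le_mul_of_nonneg_left step4 hφ0.le
  have hSC_pos : 0 < ∑ τ ∈ C, K τ := by
    refine Finset.sum_pos (fun τ _ => hKpos τ) ⟨σ₀, ?_⟩
    simp only [hC, Finset.mem_filter, Finset.mem_univ, true_and]
    rw [hσ₀a, hσ₀b] at hτab ⊢
    exact not_lt.2 hτab.le
  have hSB_nonneg : 0 ≤ ∑ σ ∈ B, K σ := Finset.sum_nonneg fun σ _ => hKnonneg σ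
  have hZ : mallowsZ N φ σ₀ = (∑ σ ∈ B, K σ) + ∑ τ ∈ C, K τ := by
    unfold mallowsZ
    rw [hB, hC]
    exact (Finset.sum_filter_add_sum_filter_not _ _ _).symm
  have hZpos : 0 < mallowsZ N φ σ₀ := by rw [hZ]; linarith
  unfold mallowsProb
  rw [div_le_div_iff₀ hZpos (by linarith : (0:ℝ) < 1 + φ)]
  have hBeq : (Finset.univ.filter fun σ : Equiv.Perm (Fin N) =>
      σ (σ₀⁻¹ i') < σ (σ₀⁻¹ i)) = B := by
    rw [hB]
  rw [hBeq, hZ]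
  nlinarith [hSB_le, hSB_nonneg, hφ0.le]
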